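/- The per-decision importance sampling estimator is unbiased: in a finite MDP with fixed horizon T, E_{τ∼π_b}[ Σ_{t'=1}^T R(s_{t'},a_{t'}) Π_{t=1}^{t'} ρ_t(τ) ] = E_{τ∼π_e}[ Σ_{t'=1}^T R(s_{t'},a_{t'}) ]. -/

import Mathlib

open Finset

/-- The joint probability of a length-`T` trajectory under policy `π`. -/
def trajProb {S A : Type*} (init : S → ℝ) (P : S → A → S → ℝ) (π : S → A → ℝ)
    (T : ℕ) (s : Fin (T + 1) → S) (a : Fin T → A) : ℝ :=
  init (s 0) * ∏ t : Fin T, π (s t.castSucc) (a t) * P (s t.castSucc) (a t) (s t.succ)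

lemma sum_fun_cons {S : Type*} [Fintype S] {M : Type*} [AddCommMonoid M] {n : ℕ}
    (f : (Fin (n + 1) → S) → M) :
    ∑ s : Fin (n + 1) → S, f s = ∑ x : S, ∑ s : Fin n → S, f (Fin.cons x s) := by
  rw [← Equiv.sum_comp (Fin.consEquiv fun _ : Fin (n+1) => S) f, Fintype.sum_prod_type]
  rfl

lemma sum_traj_cons {S A : Type*} [Fintype S] [Fintype A] {M : Type*} [AddCommMonoid M] {T : ℕ}
    (f : (Fin (T + 2) → S) → (Fin (T + 1) → A) → M) :
    ∑ s : Fin (T + 2) → S, ∑ a : Fin (T + 1) → A, f s a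
      = ∑ x : S, ∑ b : A, ∑ s : Fin (T + 1) → S, ∑ a : Fin T → A,
          f (Fin.cons x s) (Fin.cons b a) := by
  rw [sum_fun_cons (fun s : Fin (T + 2) → S => ∑ a : Fin (T + 1) → A, f s a)]
  refine sum_congr rfl fun x _ => ?_
  rw [Finset.sum_comm,
    sum_fun_cons (fun a : Fin (T + 1) → A => ∑ s : Fin (T + 1) → S, f (Fin.cons x s) a)]
  exact sum_congr rfl fun b _ => Finset.sum_comm

lemma prod_filter_le_zero {M : Type*} [CommMonoid M] {T : ℕ} (g : Fin (T + 1) → M) :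
    ∏ t ∈ Finset.univ.filter (· ≤ (0 : Fin (T + 1))), g t = g 0 := by
  rw [prod_filter, Fin.prod_univ_succ]
  simp [Fin.le_zero_iff, Fin.succ_ne_zero]

lemma prod_filter_le_succ {M : Type*} [CommMonoid M] {T : ℕ} (g : Fin (T + 1) → M) (j : Fin T) :
    ∏ t ∈ Finset.univ.filter (· ≤ j.succ), g t
      = g 0 * ∏ t ∈ Finset.univ.filter (· ≤ j), g t.succ := by
  rw [prod_filter, prod_filter, Fin.prod_univ_succ]
  simp [Fin.succ_le_succ_iff, Fin.zero_le]

lemma trajProb_cons {S A : Type*} (init : S → ℝ) (P : S → A → S → ℝ) (π : S → A → ℝ)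
    (T : ℕ) (s0 : S) (s : Fin (T + 1) → S) (a0 : A) (a : Fin T → A) :
    trajProb init P π (T + 1) (Fin.cons s0 s) (Fin.cons a0 a)
      = init s0 * π s0 a0 * trajProb (P s0 a0) P π T s a := by
  unfold trajProb
  rw [Fin.prod_univ_succ]
  simp only [Fin.cons_zero, Fin.cons_succ, Fin.castSucc_zero, Fin.succ_zero_eq_one]
  have h1 : ∀ t : Fin T, (t.succ : Fin (T+1)).castSucc = (t.castSucc).succ := by
    intro t; exact Fin.ext rfl
  have h2 : (Fin.cons s0 s : Fin (T+2) → S) 1 = s 0 := by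
    have : (1 : Fin (T+2)) = (0 : Fin (T+1)).succ := rfl
    rw [this, Fin.cons_succ]
  rw [h2]
  have h4 : ∀ x : Fin T,
      (Fin.cons s0 s : Fin (T+2) → S) ((x.succ : Fin (T+1)).castSucc) = s x.castSucc := by
    intro x; rw [h1]; simp [Fin.cons_succ]
  simp_rw [h4]
  ring

lemma trajProb_sum {S A : Type*} [Fintype S] [Fintype A]
    (P : S → A → S → ℝ) (hP1 : ∀ s a, ∑ s', P s a s' = 1)
    (π : S → A → ℝ) (hπ1 : ∀ s, ∑ a, π s a = 1) :
    ∀ (T : ℕ) (init : S → ℝ), (∑ s, init s = 1) →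
      ∑ s : Fin (T + 1) → S, ∑ a : Fin T → A, trajProb init P π T s a = 1 := by
  intro T
  induction T with
  | zero =>
    intro init hinit
    have : ∀ s : Fin 1 → S, ∑ a : Fin 0 → A, trajProb init P π 0 s a = init (s 0) := by
      intro s
      simp [trajProb]
    rw [Finset.sum_congr rfl (fun s _ => this s), sum_fun_cons (fun s : Fin 1 → S => init (s 0))]
    simpa using hinit
  | succ T ih =>
    intro init hinit
    rw [sum_traj_cons (fun s a => trajProb init P π (T+1) s a)]
    calc ∑ x : S, ∑ b : A, ∑ s : Fin (T+1) → S, ∑ a : Fin T → A,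
          trajProb init P π (T+1) (Fin.cons x s) (Fin.cons b a)
        = ∑ x : S, ∑ b : A, init x * π x b := by
          refine sum_congr rfl fun x _ => sum_congr rfl fun b _ => ?_
          have : ∑ s : Fin (T+1) → S, ∑ a : Fin T → A,
              trajProb init P π (T+1) (Fin.cons x s) (Fin.cons b a)
              = init x * π x b * 1 := by
            rw [← ih (P x b) (hP1 x b), Finset.mul_sum]
            refine sum_congr rfl fun s _ => ?_
            rw [Finset.mul_sum]
            exact sum_congr rfl fun a _ => trajProb_cons init P π T x s b a
          rw [this, mul_one]
      _ = 1 := by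
          simp_rw [← Finset.mul_sum, hπ1, mul_one]
          exact hinit

lemma pdis_key {S A : Type*} [Fintype S] [Fintype A]
    (P : S → A → S → ℝ) (hP1 : ∀ s a, ∑ s', P s a s' = 1)
    (R : S → A → ℝ) (πe πb : S → A → ℝ)
    (hπe1 : ∀ s, ∑ a, πe s a = 1)
    (hπb0 : ∀ s a, 0 < πb s a) (hπb1 : ∀ s, ∑ a, πb s a = 1) :
    ∀ (T : ℕ) (init : S → ℝ), (∑ s, init s = 1) →
    ∑ s : Fin (T + 1) → S, ∑ a : Fin T → A,
        trajProb init P πb T s a *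
          ∑ t' : Fin T, R (s t'.castSucc) (a t') *
            ∏ t ∈ Finset.univ.filter (· ≤ t'),
              πe (s t.castSucc) (a t) / πb (s t.castSucc) (a t)
      = ∑ s : Fin (T + 1) → S, ∑ a : Fin T → A,
          trajProb init P πe T s a * ∑ t' : Fin T, R (s t'.castSucc) (a t') := by
  intro T
  induction T with
  | zero => intro init _; simp
  | succ T ih =>
    intro init hinit
    rw [sum_traj_cons, sum_traj_cons]
    refine sum_congr rfl fun x _ => sum_congr rfl fun b _ => ?_
    have hπbne : πb x b ≠ 0 := ne_of_gt (hπb0 x b)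
    have hss : ∀ (s' : Fin (T+1) → S) (t : Fin T),
        (Fin.cons x s' : Fin (T+2) → S) ((t.succ : Fin (T+1)).castSucc) = s' t.castSucc := by
      intro s' t
      have h1 : (t.succ : Fin (T+1)).castSucc = (t.castSucc).succ := by exact Fin.ext rfl
      rw [h1]; simp [Fin.cons_succ]
    -- the importance-weighted return on a cons trajectory
    have hb : ∀ (s' : Fin (T+1) → S) (a' : Fin T → A),
        (∑ t' : Fin (T+1),
          R ((Fin.cons x s' : Fin (T+2) → S) t'.castSucc) ((Fin.cons b a' : Fin (T+1) → A) t') *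
            ∏ t ∈ Finset.univ.filter (· ≤ t'),
              πe ((Fin.cons x s' : Fin (T+2) → S) t.castSucc) ((Fin.cons b a' : Fin (T+1) → A) t)
                / πb ((Fin.cons x s' : Fin (T+2) → S) t.castSucc)
                    ((Fin.cons b a' : Fin (T+1) → A) t))
        = (πe x b / πb x b) *
            (R x b + ∑ j : Fin T, R (s' j.castSucc) (a' j) *
              ∏ t ∈ Finset.univ.filter (· ≤ j),
                πe (s' t.castSucc) (a' t) / πb (s' t.castSucc) (a' t)) := by
      intro s' a'
      rw [Fin.sum_univ_succ, prod_filter_le_zero]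
      simp_rw [prod_filter_le_succ, hss s', Fin.cons_succ, Fin.castSucc_zero, Fin.cons_zero]
      rw [mul_add, Finset.mul_sum]
      congr 1
      · ring
      · exact sum_congr rfl fun j _ => by ring
    -- the plain return on a cons trajectory
    have he : ∀ (s' : Fin (T+1) → S) (a' : Fin T → A),
        (∑ t' : Fin (T+1),
          R ((Fin.cons x s' : Fin (T+2) → S) t'.castSucc) ((Fin.cons b a' : Fin (T+1) → A) t'))
        = R x b + ∑ j : Fin T, R (s' j.castSucc) (a' j) := by
      intro s' a'
      rw [Fin.sum_univ_succ]
      simp_rw [hss s', Fin.cons_succ, Fin.castSucc_zero, Fin.cons_zero]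
    have hcan : πb x b * (πe x b / πb x b) = πe x b := by field_simp
    have hL : ∀ (s' : Fin (T+1) → S) (a' : Fin T → A),
        trajProb init P πb (T+1) (Fin.cons x s') (Fin.cons b a') *
          (∑ t' : Fin (T+1),
            R ((Fin.cons x s' : Fin (T+2) → S) t'.castSucc) ((Fin.cons b a' : Fin (T+1) → A) t') *
              ∏ t ∈ Finset.univ.filter (· ≤ t'),
                πe ((Fin.cons x s' : Fin (T+2) → S) t.castSucc)
                    ((Fin.cons b a' : Fin (T+1) → A) t)
                  / πb ((Fin.cons x s' : Fin (T+2) → S) t.castSucc)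
                      ((Fin.cons b a' : Fin (T+1) → A) t))
        = init x * πe x b *
            (trajProb (P x b) P πb T s' a' * R x b +
             trajProb (P x b) P πb T s' a' *
              ∑ j : Fin T, R (s' j.castSucc) (a' j) *
                ∏ t ∈ Finset.univ.filter (· ≤ j),
                  πe (s' t.castSucc) (a' t) / πb (s' t.castSucc) (a' t)) := by
      intro s' a'
      rw [trajProb_cons, hb s' a']
      set Q := trajProb (P x b) P πb T s' a' with hQ
      set G := ∑ j : Fin T, R (s' j.castSucc) (a' j) *
        ∏ t ∈ Finset.univ.filter (· ≤ j),
          πe (s' t.castSucc) (a' t) / πb (s' t.castSucc) (a' t) with hG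
      calc init x * πb x b * Q * (πe x b / πb x b * (R x b + G))
          = init x * (πb x b * (πe x b / πb x b)) * (Q * R x b + Q * G) := by ring
        _ = init x * πe x b * (Q * R x b + Q * G) := by rw [hcan]
    have hR : ∀ (s' : Fin (T+1) → S) (a' : Fin T → A),
        trajProb init P πe (T+1) (Fin.cons x s') (Fin.cons b a') *
          (∑ t' : Fin (T+1),
            R ((Fin.cons x s' : Fin (T+2) → S) t'.castSucc) ((Fin.cons b a' : Fin (T+1) → A) t'))
        = init x * πe x b *
            (trajProb (P x b) P πe T s' a' * R x b +
             trajProb (P x b) P πe T s' a' * ∑ j : Fin T, R (s' j.castSucc) (a' j)) := by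
      intro s' a'
      rw [trajProb_cons, he s' a']
      ring
    simp_rw [hL, hR, ← Finset.mul_sum, Finset.sum_add_distrib, ← Finset.sum_mul]
    rw [trajProb_sum P hP1 πb hπb1 T (P x b) (hP1 x b),
      trajProb_sum P hP1 πe hπe1 T (P x b) (hP1 x b), ih (P x b) (hP1 x b)]

/-- Unbiasedness of per-decision importance sampling (PDIS):
`E_{τ∼π_b}[Σ_{t'} R(s_{t'},a_{t'}) ∏_{t ≤ t'} ρ_t(τ)] = E_{τ∼π_e}[Σ_{t'} R(s_{t'},a_{t'})]`. -/
theorem pdis_unbiased {S A : Type*} [Fintype S] [Fintype A]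
    [Nonempty S] [Nonempty A] (T : ℕ)
    (init : S → ℝ) (hinit0 : ∀ s, 0 ≤ init s) (hinit1 : ∑ s, init s = 1)
    (P : S → A → S → ℝ) (hP0 : ∀ s a s', 0 ≤ P s a s') (hP1 : ∀ s a, ∑ s', P s a s' = 1)
    (R : S → A → ℝ)
    (πe πb : S → A → ℝ)
    (hπe0 : ∀ s a, 0 ≤ πe s a) (hπe1 : ∀ s, ∑ a, πe s a = 1)
    (hπb0 : ∀ s a, 0 < πb s a) (hπb1 : ∀ s, ∑ a, πb s a = 1) :
    ∑ s : Fin (T + 1) → S, ∑ a : Fin T → A,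
        trajProb init P πb T s a *
          ∑ t' : Fin T, R (s t'.castSucc) (a t') *
            ∏ t ∈ Finset.univ.filter (· ≤ t'),
              πe (s t.castSucc) (a t) / πb (s t.castSucc) (a t)
      = ∑ s : Fin (T + 1) → S, ∑ a : Fin T → A,
          trajProb init P πe T s a * ∑ t' : Fin T, R (s t'.castSucc) (a t') := by
  exact pdis_key P hP1 R πe πb hπe1 hπb0 hπb1 T init hinit1
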